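/- Let v : (0,∞) → ℝ be the Lennard-Jones potential v(r) = r^{−12} − r^{−6}. Then for all r in the interval (2^{1/6}, 4^{1/6}): v'(r) > 0 and r·v''(r) + v'(r) > 0; moreover the function r ↦ r·v'(r) = 6r^{−6} − 12r^{−12} is a strictly increasing bijection from (2^{1/6}, 4^{1/6}) onto (0, 3/4). In particular, for every temperature T ∈ (0, 3/4) there is a unique r₀ ∈ (2^{1/6}, 4^{1/6}) with r₀·v'(r₀) = T. -/

import Mathlib

section LJaux

private lemma lj_z6 (r : ℝ) : r ^ (-6:ℤ) = (r ^ (6:ℕ))⁻¹ := by rw [zpow_neg]; norm_cast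
private lemma lj_z7 (r : ℝ) : r ^ (-7:ℤ) = (r ^ (7:ℕ))⁻¹ := by rw [zpow_neg]; norm_cast
private lemma lj_z8 (r : ℝ) : r ^ (-8:ℤ) = (r ^ (8:ℕ))⁻¹ := by rw [zpow_neg]; norm_cast
private lemma lj_z12 (r : ℝ) : r ^ (-12:ℤ) = (r ^ (12:ℕ))⁻¹ := by rw [zpow_neg]; norm_cast
private lemma lj_z13 (r : ℝ) : r ^ (-13:ℤ) = (r ^ (13:ℕ))⁻¹ := by rw [zpow_neg]; norm_cast
private lemma lj_z14 (r : ℝ) : r ^ (-14:ℤ) = (r ^ (14:ℕ))⁻¹ := by rw [zpow_neg]; norm_cast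

private lemma lj_deriv (r : ℝ) (hr : r ≠ 0) :
    deriv (fun r : ℝ => r ^ (-12 : ℤ) - r ^ (-6 : ℤ)) r
      = -12 * r ^ (-13 : ℤ) + 6 * r ^ (-7 : ℤ) := by
  have h := ((hasDerivAt_zpow (-12) r (Or.inl hr)).sub (hasDerivAt_zpow (-6) r (Or.inl hr))).deriv
  refine h.trans ?_; norm_num

private lemma lj_deriv2 (r : ℝ) (hr : r ≠ 0) :
    deriv (deriv (fun r : ℝ => r ^ (-12 : ℤ) - r ^ (-6 : ℤ))) r
      = 156 * r ^ (-14 : ℤ) - 42 * r ^ (-8 : ℤ) := by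
  have hev : deriv (fun r : ℝ => r ^ (-12 : ℤ) - r ^ (-6 : ℤ))
      =ᶠ[nhds r] fun x : ℝ => -12 * x ^ (-13 : ℤ) + 6 * x ^ (-7 : ℤ) := by
    filter_upwards [isOpen_compl_singleton.mem_nhds (by simpa using hr)] with x hx
    exact lj_deriv x hx
  rw [hev.deriv_eq]
  have h := (((hasDerivAt_zpow (-13) r (Or.inl hr)).const_mul (-12 : ℝ)).add
    ((hasDerivAt_zpow (-7) r (Or.inl hr)).const_mul (6 : ℝ))).deriv
  refine h.trans ?_; norm_num; ring

end LJaux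

theorem lennard_jones_hypotheses (v : ℝ → ℝ)
    (hv : v = fun r => r ^ (-12 : ℤ) - r ^ (-6 : ℤ)) :
    (∀ r ∈ Set.Ioo ((2:ℝ) ^ ((6:ℝ)⁻¹)) ((4:ℝ) ^ ((6:ℝ)⁻¹)),
      0 < deriv v r ∧ 0 < r * deriv (deriv v) r + deriv v r ∧
      r * deriv v r = 6 * r ^ (-6 : ℤ) - 12 * r ^ (-12 : ℤ)) ∧
    StrictMonoOn (fun r => r * deriv v r)
      (Set.Ioo ((2:ℝ) ^ ((6:ℝ)⁻¹)) ((4:ℝ) ^ ((6:ℝ)⁻¹))) ∧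
    Set.BijOn (fun r => r * deriv v r)
      (Set.Ioo ((2:ℝ) ^ ((6:ℝ)⁻¹)) ((4:ℝ) ^ ((6:ℝ)⁻¹)))
      (Set.Ioo 0 (3/4)) ∧
    ∀ T ∈ Set.Ioo (0:ℝ) (3/4),
      ∃! r₀, r₀ ∈ Set.Ioo ((2:ℝ) ^ ((6:ℝ)⁻¹)) ((4:ℝ) ^ ((6:ℝ)⁻¹)) ∧
        r₀ * deriv v r₀ = T := by
  subst hv
  set a : ℝ := (2:ℝ) ^ ((6:ℝ)⁻¹) with ha
  set b : ℝ := (4:ℝ) ^ ((6:ℝ)⁻¹) with hb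
  have hapos : 0 < a := Real.rpow_pos_of_pos (by norm_num) _
  have hbpos : 0 < b := Real.rpow_pos_of_pos (by norm_num) _
  have ha6 : a ^ (6:ℕ) = 2 := by
    rw [ha, ← Real.rpow_natCast ((2:ℝ) ^ ((6:ℝ)⁻¹)) 6, ← Real.rpow_mul (by norm_num)]
    norm_num
  have hb6 : b ^ (6:ℕ) = 4 := by
    rw [hb, ← Real.rpow_natCast ((4:ℝ) ^ ((6:ℝ)⁻¹)) 6, ← Real.rpow_mul (by norm_num)]
    norm_num
  have hab : a < b := lt_of_pow_lt_pow_left₀ 6 hbpos.le (by rw [ha6, hb6]; norm_num)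
  have hx : ∀ r ∈ Set.Ioo a b, 0 < r ∧ 2 < r ^ (6:ℕ) ∧ r ^ (6:ℕ) < 4 := by
    intro r hr
    have hr0 : 0 < r := hapos.trans hr.1
    refine ⟨hr0, ?_, ?_⟩
    · calc (2:ℝ) = a ^ (6:ℕ) := ha6.symm
        _ < r ^ (6:ℕ) := pow_lt_pow_left₀ hr.1 hapos.le (by norm_num)
    · calc r ^ (6:ℕ) < b ^ (6:ℕ) := pow_lt_pow_left₀ hr.2 hr0.le (by norm_num)
        _ = 4 := hb6
  have hform : ∀ r : ℝ, r ≠ 0 →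
      r * deriv (fun r : ℝ => r ^ (-12 : ℤ) - r ^ (-6 : ℤ)) r
        = 6 * r ^ (-6 : ℤ) - 12 * r ^ (-12 : ℤ) := by
    intro r hr
    rw [lj_deriv r hr, lj_z13, lj_z7, lj_z6, lj_z12]
    field_simp
    ring
  have hg : ∀ r : ℝ, r ≠ 0 →
      6 * r ^ (-6 : ℤ) - 12 * r ^ (-12 : ℤ)
        = (6 * r ^ (6:ℕ) - 12) / (r ^ (6:ℕ)) ^ 2 := by
    intro r hr
    rw [lj_z6, lj_z12]
    field_simp
  have part1 : ∀ r ∈ Set.Ioo a b,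
      0 < deriv (fun r : ℝ => r ^ (-12 : ℤ) - r ^ (-6 : ℤ)) r ∧
      0 < r * deriv (deriv (fun r : ℝ => r ^ (-12 : ℤ) - r ^ (-6 : ℤ))) r +
        deriv (fun r : ℝ => r ^ (-12 : ℤ) - r ^ (-6 : ℤ)) r ∧
      r * deriv (fun r : ℝ => r ^ (-12 : ℤ) - r ^ (-6 : ℤ)) r
        = 6 * r ^ (-6 : ℤ) - 12 * r ^ (-12 : ℤ) := by
    intro r hr
    obtain ⟨hr0, h2, h4⟩ := hx r hr
    have hrne : r ≠ 0 := hr0.ne'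
    refine ⟨?_, ?_, hform r hrne⟩
    · rw [lj_deriv r hrne, lj_z13, lj_z7]
      have heq : -12 * (r ^ (13:ℕ))⁻¹ + 6 * (r ^ (7:ℕ))⁻¹
          = (6 * r ^ (6:ℕ) - 12) / r ^ (13:ℕ) := by
        field_simp; ring
      rw [heq]
      exact div_pos (by nlinarith) (by positivity)
    · rw [lj_deriv r hrne, lj_deriv2 r hrne, lj_z13, lj_z7, lj_z14, lj_z8]
      have heq : r * (156 * (r ^ (14:ℕ))⁻¹ - 42 * (r ^ (8:ℕ))⁻¹) +
          (-12 * (r ^ (13:ℕ))⁻¹ + 6 * (r ^ (7:ℕ))⁻¹)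
          = (144 - 36 * r ^ (6:ℕ)) / r ^ (13:ℕ) := by
        field_simp; ring
      rw [heq]
      exact div_pos (by nlinarith) (by positivity)
  have hmono : StrictMonoOn
      (fun r => r * deriv (fun r : ℝ => r ^ (-12 : ℤ) - r ^ (-6 : ℤ)) r)
      (Set.Ioo a b) := by
    intro r hr s hs hrs
    obtain ⟨hr0, hr2, hr4⟩ := hx r hr
    obtain ⟨hs0, hs2, hs4⟩ := hx s hs
    simp only
    rw [hform r hr0.ne', hform s hs0.ne', hg r hr0.ne', hg s hs0.ne']
    set x := r ^ (6:ℕ) with hxdef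
    set y := s ^ (6:ℕ) with hydef
    have hxy : x < y := pow_lt_pow_left₀ hrs hr0.le (by norm_num)
    rw [div_lt_div_iff₀ (by positivity) (by positivity)]
    nlinarith [mul_pos (sub_pos.mpr hxy)
      (show (0:ℝ) < 2 * x + 2 * y - x * y by
        nlinarith [mul_pos (sub_pos.mpr hr4) (sub_pos.mpr hs2)]),
      sq_nonneg (x - y), mul_pos (sub_pos.mpr hr2) (sub_pos.mpr hs2)]
  have hmaps : Set.MapsTo
      (fun r => r * deriv (fun r : ℝ => r ^ (-12 : ℤ) - r ^ (-6 : ℤ)) r)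
      (Set.Ioo a b) (Set.Ioo 0 (3/4)) := by
    intro r hr
    obtain ⟨hr0, hr2, hr4⟩ := hx r hr
    simp only
    rw [hform r hr0.ne', hg r hr0.ne']
    constructor
    · exact div_pos (by nlinarith) (by positivity)
    · rw [div_lt_iff₀ (by positivity)]
      nlinarith [sq_nonneg (r ^ (6:ℕ) - 4)]
  have hcont : ContinuousOn
      (fun r => r * deriv (fun r : ℝ => r ^ (-12 : ℤ) - r ^ (-6 : ℤ)) r)
      (Set.Icc a b) := by
    apply ContinuousOn.congr (f := fun r : ℝ => 6 * r ^ (-6 : ℤ) - 12 * r ^ (-12 : ℤ))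
    · apply ContinuousOn.sub
      · exact continuousOn_const.mul
          ((continuousOn_id : ContinuousOn _ (Set.Icc a b)).zpow₀ (-6)
            fun x hx => Or.inl (hapos.trans_le hx.1).ne')
      · exact continuousOn_const.mul
          ((continuousOn_id : ContinuousOn _ (Set.Icc a b)).zpow₀ (-12)
            fun x hx => Or.inl (hapos.trans_le hx.1).ne')
    · intro r hr
      exact hform r (hapos.trans_le hr.1).ne'
  have hfa : a * deriv (fun r : ℝ => r ^ (-12 : ℤ) - r ^ (-6 : ℤ)) a = 0 := by
    rw [hform a hapos.ne', hg a hapos.ne', ha6]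
    norm_num
  have hfb : b * deriv (fun r : ℝ => r ^ (-12 : ℤ) - r ^ (-6 : ℤ)) b = 3/4 := by
    rw [hform b hbpos.ne', hg b hbpos.ne', hb6]
    norm_num
  have hsurj : Set.SurjOn
      (fun r => r * deriv (fun r : ℝ => r ^ (-12 : ℤ) - r ^ (-6 : ℤ)) r)
      (Set.Ioo a b) (Set.Ioo 0 (3/4)) := by
    have h := intermediate_value_Ioo hab.le hcont
    rw [hfa, hfb] at h
    exact h
  have hbij : Set.BijOn
      (fun r => r * deriv (fun r : ℝ => r ^ (-12 : ℤ) - r ^ (-6 : ℤ)) r)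
      (Set.Ioo a b) (Set.Ioo 0 (3/4)) := ⟨hmaps, hmono.injOn, hsurj⟩
  refine ⟨part1, hmono, hbij, ?_⟩
  intro T hT
  obtain ⟨r₀, hr₀, hfr₀⟩ := hsurj hT
  exact ⟨r₀, ⟨hr₀, hfr₀⟩, fun s hs => hmono.injOn hs.1 hr₀ (hs.2.trans hfr₀.symm)⟩
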